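/- Let N be a positive homogeneous normalization with each N_{ai} continuous, and let (m̃^{(n)}) be the normalized BP sequence started from a strictly positive message set. (i) If the sequences of beliefs b_i^{(n)} (for every variable node i) and b_a^{(n)} (for every factor node a) associated with m̃^{(n)} converge as n → ∞ to strictly positive limits, then the message sequence m̃^{(n)} converges in ℝ^{E×q}. (ii) Conversely, if m̃^{(n)} converges to a strictly positive limit message set, then all the belief sequences converge. Thus, under these positivity conditions, m-convergence and b-convergence of normalized BP are equivalent. -/

import Mathlib

open Finset Filter

variable {V F : Type*} [Fintype V] [DecidableEq V] [Fintype F] [DecidableEq F]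

/-- Configurations on the factor `a`: tuples `x_a ∈ {1,…,q}^a`. -/
abbrev Config (S : F → Finset V) (q : ℕ) (a : F) := {i : V // i ∈ S a} → Fin q

/-- The message `n_{i→a}(x_i) = φ_i(x_i) ∏_{a'∋i, a'≠a} m_{a'→i}(x_i)`. -/
noncomputable def nmsg (S : F → Finset V) {q : ℕ} (φ : V → Fin q → ℝ)
    (m : F → V → Fin q → ℝ) (i : V) (a : F) (x : Fin q) : ℝ :=
  φ i x * ∏ a' ∈ univ.filter (fun a' : F => i ∈ S a' ∧ a' ≠ a), m a' i x

/-- The belief-propagation update `Θ_{ai}(m)(x_i) = Σ_{x_{a∖i}} ψ_a(x_a) ∏_{j∈a∖i} n_{j→a}(x_j)`. -/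
noncomputable def theta (S : F → Finset V) {q : ℕ} (φ : V → Fin q → ℝ)
    (ψ : ∀ a : F, Config S q a → ℝ) (m : F → V → Fin q → ℝ)
    (a : F) (i : V) (hi : i ∈ S a) (x : Fin q) : ℝ :=
  ∑ y ∈ univ.filter (fun y : Config S q a => y ⟨i, hi⟩ = x),
    ψ a y * ∏ j ∈ (S a).attach.filter (fun j => j.1 ≠ i), nmsg S φ m j.1 a (y j)

/-- The normalization constant `Z_i(m)` making the variable belief sum to `1`. -/
noncomputable def Zv (S : F → Finset V) {q : ℕ} (φ : V → Fin q → ℝ)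
    (m : F → V → Fin q → ℝ) (i : V) : ℝ :=
  ∑ x : Fin q, φ i x * ∏ a ∈ univ.filter (fun a : F => i ∈ S a), m a i x

/-- The variable belief `b_i(x_i) = φ_i(x_i) ∏_{a∋i} m_{a→i}(x_i) / Z_i(m)`. -/
noncomputable def bv (S : F → Finset V) {q : ℕ} (φ : V → Fin q → ℝ)
    (m : F → V → Fin q → ℝ) (i : V) (x : Fin q) : ℝ :=
  (φ i x * ∏ a ∈ univ.filter (fun a : F => i ∈ S a), m a i x) / Zv S φ m i

/-- The normalization constant `Z_a(m)` making the factor belief sum to `1`. -/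
noncomputable def Zf (S : F → Finset V) {q : ℕ} (φ : V → Fin q → ℝ)
    (ψ : ∀ a : F, Config S q a → ℝ) (m : F → V → Fin q → ℝ) (a : F) : ℝ :=
  ∑ y : Config S q a, ψ a y * ∏ j ∈ (S a).attach, nmsg S φ m j.1 a (y j)

/-- The factor belief `b_a(x_a) = ψ_a(x_a) ∏_{i∈a} n_{i→a}(x_i) / Z_a(m)`. -/
noncomputable def bfn (S : F → Finset V) {q : ℕ} (φ : V → Fin q → ℝ)
    (ψ : ∀ a : F, Config S q a → ℝ) (m : F → V → Fin q → ℝ) (a : F)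
    (y : Config S q a) : ℝ :=
  (ψ a y * ∏ j ∈ (S a).attach, nmsg S φ m j.1 a (y j)) / Zf S φ ψ m a


section Helpers
set_option linter.unusedSectionVars false

variable {V F : Type*} [Fintype V] [DecidableEq V] [Fintype F] [DecidableEq F]

lemma nmsg_pos (S : F → Finset V) {q : ℕ} (φ : V → Fin q → ℝ)
    (m : F → V → Fin q → ℝ) (hφ : ∀ i x, 0 < φ i x)
    (hm : ∀ a i, i ∈ S a → ∀ x, 0 < m a i x) (i : V) (a : F) (x : Fin q) :
    0 < nmsg S φ m i a x := by
  unfold nmsg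
  exact mul_pos (hφ i x)
    (Finset.prod_pos fun a' ha' => hm a' i (Finset.mem_filter.mp ha').2.1 x)

lemma theta_pos (S : F → Finset V) {q : ℕ} (φ : V → Fin q → ℝ)
    (ψ : ∀ a : F, Config S q a → ℝ) (m : F → V → Fin q → ℝ)
    (hφ : ∀ i x, 0 < φ i x) (hψ : ∀ a y, 0 < ψ a y)
    (hm : ∀ a i, i ∈ S a → ∀ x, 0 < m a i x) (a : F) (i : V) (hi : i ∈ S a) (x : Fin q) :
    0 < theta S φ ψ m a i hi x := by
  unfold theta
  apply Finset.sum_pos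
  · intro y _
    exact mul_pos (hψ a y) (Finset.prod_pos fun j _ => nmsg_pos S φ m hφ hm j.1 a (y j))
  · exact ⟨fun _ => x, by simp⟩

lemma Zv_pos (S : F → Finset V) {q : ℕ} (hq : 1 ≤ q) (φ : V → Fin q → ℝ)
    (m : F → V → Fin q → ℝ) (hφ : ∀ i x, 0 < φ i x)
    (hm : ∀ a i, i ∈ S a → ∀ x, 0 < m a i x) (i : V) :
    0 < Zv S φ m i := by
  unfold Zv
  apply Finset.sum_pos
  · intro x _
    exact mul_pos (hφ i x)
      (Finset.prod_pos fun a' ha' => hm a' i (Finset.mem_filter.mp ha').2 x)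
  · exact ⟨⟨0, hq⟩, Finset.mem_univ _⟩

lemma Zf_pos (S : F → Finset V) {q : ℕ} (hq : 1 ≤ q) (φ : V → Fin q → ℝ)
    (ψ : ∀ a : F, Config S q a → ℝ) (m : F → V → Fin q → ℝ)
    (hφ : ∀ i x, 0 < φ i x) (hψ : ∀ a y, 0 < ψ a y)
    (hm : ∀ a i, i ∈ S a → ∀ x, 0 < m a i x) (a : F) :
    0 < Zf S φ ψ m a := by
  unfold Zf
  apply Finset.sum_pos
  · intro y _
    exact mul_pos (hψ a y) (Finset.prod_pos fun j _ => nmsg_pos S φ m hφ hm j.1 a (y j))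
  · exact ⟨fun _ => ⟨0, hq⟩, Finset.mem_univ _⟩

lemma Npos {q : ℕ} (hq : 1 ≤ q) (N : (Fin q → ℝ) → ℝ)
    (hz : ∀ u : Fin q → ℝ, (∀ x, 0 ≤ u x) → (N u = 0 ↔ u = 0))
    (hnn : ∀ u : Fin q → ℝ, (∀ x, 0 ≤ u x) → 0 ≤ N u)
    (u : Fin q → ℝ) (hu : ∀ x, 0 < u x) : 0 < N u := by
  rcases (hnn u fun x => (hu x).le).lt_or_eq with h | h
  · exact h
  · exfalso
    have h0 := (hz u fun x => (hu x).le).mp h.symm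
    exact (hu ⟨0, hq⟩).ne' (congrFun h0 ⟨0, hq⟩)

lemma ratio_identity (u v p s t f g Z : ℝ) (hZ : Z ≠ 0) (hp : p ≠ 0) (hs : s ≠ 0)
    (ht : t ≠ 0) (hf : f ≠ 0) (hg : g ≠ 0) (hv : v ≠ 0) :
    u / v = ((s * ((f * u) * p)) / Z) / ((t * ((g * v) * p)) / Z) * (t / s) * (g / f) := by
  field_simp

end Helpers

/-- For a continuous positive homogeneous normalization, `m`-convergence and `b`-convergence
of normalized BP are equivalent: (i) if the beliefs converge to strictly positive limits then
the messages converge; (ii) if the messages converge to a strictly positive limit then the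
beliefs converge. -/
theorem m_convergence_iff_b_convergence
    (q : ℕ) (hq : 1 ≤ q) (S : F → Finset V) (hS : ∀ a, (S a).Nonempty)
    (φ : V → Fin q → ℝ) (ψ : ∀ a : F, Config S q a → ℝ)
    (hφ : ∀ i x, 0 < φ i x) (hψ : ∀ a y, 0 < ψ a y)
    (N : F → V → (Fin q → ℝ) → ℝ)
    (hNhom : ∀ a i, i ∈ S a → ∀ lam : ℝ, 0 ≤ lam → ∀ u : Fin q → ℝ, (∀ x, 0 ≤ u x) →
      N a i (fun x => lam * u x) = lam * N a i u)
    (hNzero : ∀ a i, i ∈ S a → ∀ u : Fin q → ℝ, (∀ x, 0 ≤ u x) → (N a i u = 0 ↔ u = 0))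
    (hNnonneg : ∀ a i, i ∈ S a → ∀ u : Fin q → ℝ, (∀ x, 0 ≤ u x) → 0 ≤ N a i u)
    (hNcont : ∀ a i, i ∈ S a → Continuous (N a i))
    (mt : ℕ → F → V → Fin q → ℝ)
    (hm0 : ∀ a i, i ∈ S a → ∀ x, 0 < mt 0 a i x)
    (hrect : ∀ n a i (hi : i ∈ S a) (x : Fin q),
      mt (n + 1) a i x
        = theta S φ ψ (mt n) a i hi x / N a i (theta S φ ψ (mt n) a i hi)) :
    -- (i) b-convergence (to strictly positive limits) implies m-convergence
    ((∀ (bl : V → Fin q → ℝ) (bla : ∀ a : F, Config S q a → ℝ),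
        (∀ i x, 0 < bl i x) → (∀ a y, 0 < bla a y) →
        (∀ i x, Tendsto (fun n => bv S φ (mt n) i x) atTop (nhds (bl i x))) →
        (∀ (a : F) (y : Config S q a),
          Tendsto (fun n => bfn S φ ψ (mt n) a y) atTop (nhds (bla a y))) →
        ∀ a i, i ∈ S a → ∀ x, ∃ L : ℝ, Tendsto (fun n => mt n a i x) atTop (nhds L))
    ∧
    -- (ii) m-convergence (to a strictly positive limit) implies b-convergence
    (∀ ml : F → V → Fin q → ℝ,
        (∀ a i, i ∈ S a → ∀ x, 0 < ml a i x) →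
        (∀ a i, i ∈ S a → ∀ x, Tendsto (fun n => mt n a i x) atTop (nhds (ml a i x))) →
        (∀ i x, ∃ L : ℝ, Tendsto (fun n => bv S φ (mt n) i x) atTop (nhds L)) ∧
        (∀ (a : F) (y : Config S q a),
          ∃ L : ℝ, Tendsto (fun n => bfn S φ ψ (mt n) a y) atTop (nhds L))))  := by
  classical
  -- positivity of all iterates
  have hmt : ∀ n a i, i ∈ S a → ∀ x, 0 < mt n a i x := by
    intro n
    induction n with
    | zero => exact hm0
    | succ n ih =>
      intro a i hi x
      rw [hrect n a i hi x]
      have hθ : ∀ z, 0 < theta S φ ψ (mt n) a i hi z :=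
        fun z => theta_pos S φ ψ (mt n) hφ hψ ih a i hi z
      exact div_pos (hθ x) (Npos hq (N a i) (hNzero a i hi) (hNnonneg a i hi) _ hθ)
  constructor
  · -- (i)
    intro bl bla hblpos hblapos hbv hbfa a i hi x
    set x₀ : Fin q := ⟨0, hq⟩ with hx₀
    -- key renormalization identity
    have hkey : ∀ n z, mt (n + 1) a i z
        = (mt (n + 1) a i z / mt (n + 1) a i x₀)
          / N a i (fun w => mt (n + 1) a i w / mt (n + 1) a i x₀) := by
      intro n z
      have hθ : ∀ w, 0 < theta S φ ψ (mt n) a i hi w :=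
        fun w => theta_pos S φ ψ (mt n) hφ hψ (hmt n) a i hi w
      have hNθ : 0 < N a i (theta S φ ψ (mt n) a i hi) :=
        Npos hq (N a i) (hNzero a i hi) (hNnonneg a i hi) _ hθ
      have hcpos : 0 < mt (n + 1) a i x₀ := hmt (n + 1) a i hi x₀
      have h1 : (fun w => mt (n + 1) a i w / mt (n + 1) a i x₀)
          = fun w => ((N a i (theta S φ ψ (mt n) a i hi))⁻¹ * (mt (n + 1) a i x₀)⁻¹)
              * theta S φ ψ (mt n) a i hi w := by
        funext w
        rw [hrect n a i hi w]
        field_simp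
      rw [h1, hNhom a i hi _ (by positivity) _ (fun w => (hθ w).le)]
      rw [hrect n a i hi z]
      field_simp
    -- convergence of ratios for every coordinate
    have hr : ∀ x' : Fin q, ∃ L, 0 < L ∧
        Tendsto (fun n => mt n a i x' / mt n a i x₀) atTop (nhds L) := by
      intro x'
      -- variable-side ratio
      have hQid : ∀ n, (∏ a' ∈ univ.filter (fun a' : F => i ∈ S a'),
            (mt n a' i x' / mt n a' i x₀))
          = (bv S φ (mt n) i x' / bv S φ (mt n) i x₀) * (φ i x₀ / φ i x') := by
        intro n
        have hZ : 0 < Zv S φ (mt n) i := Zv_pos S hq φ (mt n) hφ (hmt n) i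
        have h0 : 0 < ∏ a' ∈ univ.filter (fun a' : F => i ∈ S a'), mt n a' i x₀ :=
          Finset.prod_pos fun a' ha' => hmt n a' i (Finset.mem_filter.mp ha').2 x₀
        rw [Finset.prod_div_distrib]
        unfold bv
        field_simp [hZ.ne', h0.ne', (hφ i x').ne', (hφ i x₀).ne']
      have hQt : Tendsto (fun n => ∏ a' ∈ univ.filter (fun a' : F => i ∈ S a'),
            (mt n a' i x' / mt n a' i x₀)) atTop
          (nhds ((bl i x' / bl i x₀) * (φ i x₀ / φ i x'))) := by
        refine Tendsto.congr (fun n => (hQid n).symm) ?_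
        exact ((hbv i x').div (hbv i x₀) (hblpos i x₀).ne').mul tendsto_const_nhds
      -- factor-side ratio
      set j₀ : {v // v ∈ S a} := ⟨i, hi⟩ with hj₀
      set y₀ : Config S q a := fun _ => x₀ with hy₀
      set y1 : Config S q a := Function.update y₀ j₀ x' with hy1
      have hPid : ∀ n, (∏ a' ∈ univ.filter (fun a' : F => i ∈ S a' ∧ a' ≠ a),
            (mt n a' i x' / mt n a' i x₀))
          = (bfn S φ ψ (mt n) a y1 / bfn S φ ψ (mt n) a y₀) * (ψ a y₀ / ψ a y1)
              * (φ i x₀ / φ i x') := by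
        intro n
        have hZ : 0 < Zf S φ ψ (mt n) a := Zf_pos S hq φ ψ (mt n) hφ hψ (hmt n) a
        have hs1 : (∏ j ∈ (S a).attach, nmsg S φ (mt n) j.1 a (y1 j))
            = nmsg S φ (mt n) i a x'
              * ∏ j ∈ ((S a).attach.erase j₀), nmsg S φ (mt n) j.1 a (y₀ j) := by
          rw [← Finset.mul_prod_erase _ _ (Finset.mem_attach _ j₀)]
          congr 1
          · simp [hy1, hj₀]
          · refine Finset.prod_congr rfl fun j hj => ?_
            rw [hy1, Function.update_of_ne (Finset.ne_of_mem_erase hj)]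
        have hs0 : (∏ j ∈ (S a).attach, nmsg S φ (mt n) j.1 a (y₀ j))
            = nmsg S φ (mt n) i a x₀
              * ∏ j ∈ ((S a).attach.erase j₀), nmsg S φ (mt n) j.1 a (y₀ j) := by
          rw [← Finset.mul_prod_erase _ _ (Finset.mem_attach _ j₀)]
        have hPp : 0 < ∏ j ∈ ((S a).attach.erase j₀), nmsg S φ (mt n) j.1 a (y₀ j) :=
          Finset.prod_pos fun j _ => nmsg_pos S φ (mt n) hφ (hmt n) j.1 a (y₀ j)
        have h0 : 0 < ∏ a' ∈ univ.filter (fun a' : F => i ∈ S a' ∧ a' ≠ a), mt n a' i x₀ :=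
          Finset.prod_pos fun a' ha' => hmt n a' i (Finset.mem_filter.mp ha').2.1 x₀
        unfold bfn
        rw [hs1, hs0, Finset.prod_div_distrib]
        set P := ∏ j ∈ ((S a).attach.erase j₀), nmsg S φ (mt n) j.1 a (y₀ j) with hP
        unfold nmsg
        exact ratio_identity _ _ _ _ _ _ _ _ hZ.ne' hPp.ne' (hψ a y1).ne' (hψ a y₀).ne'
          (hφ i x').ne' (hφ i x₀).ne' h0.ne'
      have hPt : Tendsto (fun n => ∏ a' ∈ univ.filter (fun a' : F => i ∈ S a' ∧ a' ≠ a),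
            (mt n a' i x' / mt n a' i x₀)) atTop
          (nhds ((bla a y1 / bla a y₀) * (ψ a y₀ / ψ a y1) * (φ i x₀ / φ i x'))) := by
        refine Tendsto.congr (fun n => (hPid n).symm) ?_
        exact (((hbfa a y1).div (hbfa a y₀) (hblapos a y₀).ne').mul
          tendsto_const_nhds).mul tendsto_const_nhds
      -- combine
      have hLQ : 0 < (bl i x' / bl i x₀) * (φ i x₀ / φ i x') := by
        have := hblpos i x'; have := hblpos i x₀; have := hφ i x'; have := hφ i x₀
        positivity
      have hLP : 0 < (bla a y1 / bla a y₀) * (ψ a y₀ / ψ a y1) * (φ i x₀ / φ i x') := by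
        have := hblapos a y1; have := hblapos a y₀; have := hψ a y1; have := hψ a y₀
        have := hφ i x'; have := hφ i x₀
        positivity
      have herase : (univ.filter (fun a' : F => i ∈ S a' ∧ a' ≠ a))
          = (univ.filter (fun a' : F => i ∈ S a')).erase a := by
        ext a''
        simp only [Finset.mem_erase, Finset.mem_filter, Finset.mem_univ, true_and]
        tauto
      have hPpos : ∀ n, 0 < ∏ a' ∈ univ.filter (fun a' : F => i ∈ S a' ∧ a' ≠ a),
          (mt n a' i x' / mt n a' i x₀) := fun n =>
        Finset.prod_pos fun a' ha' =>
          div_pos (hmt n a' i (Finset.mem_filter.mp ha').2.1 x')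
            (hmt n a' i (Finset.mem_filter.mp ha').2.1 x₀)
      have hQP : ∀ n, (∏ a' ∈ univ.filter (fun a' : F => i ∈ S a'),
            (mt n a' i x' / mt n a' i x₀))
          = (mt n a i x' / mt n a i x₀)
            * ∏ a' ∈ univ.filter (fun a' : F => i ∈ S a' ∧ a' ≠ a),
                (mt n a' i x' / mt n a' i x₀) := by
        intro n
        rw [herase]
        exact (Finset.mul_prod_erase _ (fun a' => mt n a' i x' / mt n a' i x₀)
          (Finset.mem_filter.mpr ⟨Finset.mem_univ a, hi⟩)).symm
      refine ⟨_, div_pos hLQ hLP, ?_⟩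
      refine Tendsto.congr (fun n => ?_) (hQt.div hPt hLP.ne')
      simp only [Pi.div_apply]
      rw [hQP n]
      exact mul_div_cancel_right₀ _ (hPpos n).ne'
    choose ρ hρpos hρtend using hr
    have hNρ : 0 < N a i ρ := Npos hq (N a i) (hNzero a i hi) (hNnonneg a i hi) ρ hρpos
    refine ⟨ρ x / N a i ρ, ?_⟩
    have htendρ : Tendsto (fun n => (fun w => mt n a i w / mt n a i x₀)) atTop (nhds ρ) :=
      tendsto_pi_nhds.mpr hρtend
    have hNt : Tendsto (fun n => N a i (fun w => mt n a i w / mt n a i x₀)) atTop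
        (nhds (N a i ρ)) := ((hNcont a i hi).tendsto ρ).comp htendρ
    have hmain : Tendsto (fun n => (mt n a i x / mt n a i x₀)
        / N a i (fun w => mt n a i w / mt n a i x₀)) atTop (nhds (ρ x / N a i ρ)) :=
      (hρtend x).div hNt hNρ.ne'
    refine Tendsto.congr' ?_ hmain
    filter_upwards [eventually_ge_atTop 1] with n hn
    obtain ⟨k, rfl⟩ := Nat.exists_eq_add_of_le' hn
    exact (hkey k x).symm
  · -- (ii)
    intro ml hmlpos hmltend
    constructor
    · intro i x
      refine ⟨bv S φ ml i x, ?_⟩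
      have hnum : ∀ x' : Fin q,
          Tendsto (fun n => φ i x' * ∏ a' ∈ univ.filter (fun a' : F => i ∈ S a'), mt n a' i x')
            atTop (nhds (φ i x' * ∏ a' ∈ univ.filter (fun a' : F => i ∈ S a'), ml a' i x')) :=
        fun x' => tendsto_const_nhds.mul
          (tendsto_finset_prod _ fun a' ha' => hmltend a' i (Finset.mem_filter.mp ha').2 x')
      have hZ : Tendsto (fun n => Zv S φ (mt n) i) atTop (nhds (Zv S φ ml i)) := by
        unfold Zv
        exact tendsto_finset_sum _ fun x' _ => hnum x'
      have hZpos : 0 < Zv S φ ml i := Zv_pos S hq φ ml hφ hmlpos i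
      unfold bv
      exact (hnum x).div hZ hZpos.ne'
    · intro a y
      refine ⟨bfn S φ ψ ml a y, ?_⟩
      have hnm : ∀ (j : V) (x' : Fin q),
          Tendsto (fun n => nmsg S φ (mt n) j a x') atTop (nhds (nmsg S φ ml j a x')) := by
        intro j x'
        unfold nmsg
        exact tendsto_const_nhds.mul
          (tendsto_finset_prod _ fun a' ha' => hmltend a' j (Finset.mem_filter.mp ha').2.1 x')
      have hnum : ∀ z : Config S q a,
          Tendsto (fun n => ψ a z * ∏ j ∈ (S a).attach, nmsg S φ (mt n) j.1 a (z j))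
            atTop (nhds (ψ a z * ∏ j ∈ (S a).attach, nmsg S φ ml j.1 a (z j))) :=
        fun z => tendsto_const_nhds.mul (tendsto_finset_prod _ fun j _ => hnm j.1 (z j))
      have hZ : Tendsto (fun n => Zf S φ ψ (mt n) a) atTop (nhds (Zf S φ ψ ml a)) := by
        unfold Zf
        exact tendsto_finset_sum _ fun z _ => hnum z
      have hZpos : 0 < Zf S φ ψ ml a := Zf_pos S hq φ ψ ml hφ hψ hmlpos a
      unfold bfn
      exact (hnum y).div hZ hZpos.ne'
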